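/- Let A ∈ ℝ^{N×d} satisfy RIP at levels k and 2k with constants δ_k, δ_{2k} < 1, and let x ∈ Ker(A) \ {0}. If U is the set of the k largest-magnitude entries of x, then ‖x‖₂ ≤ (1 + δ_{2k}/(1−δ_k)) · (1/√k) · ‖x‖₁. -/

import Mathlib

open Finset Matrix

noncomputable def l1 {ι : Type*} [Fintype ι] (x : ι → ℝ) : ℝ := ∑ i, |x i|

noncomputable def l2 {ι : Type*} [Fintype ι] (x : ι → ℝ) : ℝ := Real.sqrt (∑ i, (x i) ^ 2)

open scoped Classical in
/-- `x` has at most `m` nonzero entries. -/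
def sparse {ι : Type*} [Fintype ι] (m : ℕ) (x : ι → ℝ) : Prop :=
  (Finset.univ.filter (fun i => x i ≠ 0)).card ≤ m

/-- Restricted Isometry Property at level `m` with constant `δ`. -/
def RIP {N d : ℕ} (A : Matrix (Fin N) (Fin d) ℝ) (m : ℕ) (δ : ℝ) : Prop :=
  ∀ x : Fin d → ℝ, sparse m x →
    (1 - δ) * (l2 x) ^ 2 ≤ (l2 (A.mulVec x)) ^ 2 ∧
    (l2 (A.mulVec x)) ^ 2 ≤ (1 + δ) * (l2 x) ^ 2

/-- Restriction of a vector to the coordinates in `S` (zero elsewhere). -/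
def restr {d : ℕ} (S : Finset (Fin d)) (x : Fin d → ℝ) : Fin d → ℝ :=
  fun i => if i ∈ S then x i else 0

lemma l2_sq {ι : Type*} [Fintype ι] (x : ι → ℝ) : l2 x ^ 2 = ∑ i, (x i) ^ 2 :=
  Real.sq_sqrt (by positivity)
lemma l2_nonneg {ι : Type*} [Fintype ι] (x : ι → ℝ) : 0 ≤ l2 x := Real.sqrt_nonneg _
lemma l2_eq_zero {ι : Type*} [Fintype ι] {x : ι → ℝ} (h : l2 x = 0) : x = 0 := by
  funext i
  have hs : ∑ i, (x i) ^ 2 = 0 := by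
    have h2 := Real.sqrt_eq_zero'.mp h
    have h3 : (0:ℝ) ≤ ∑ i, (x i) ^ 2 := by positivity
    linarith
  have := (Finset.sum_eq_zero_iff_of_nonneg (fun i _ => sq_nonneg (x i))).mp hs i (mem_univ i)
  exact pow_eq_zero_iff (by norm_num) |>.mp this
lemma l2_smul {ι : Type*} [Fintype ι] (c : ℝ) (x : ι → ℝ) : l2 (c • x) = |c| * l2 x := by
  simp only [l2, Pi.smul_apply, smul_eq_mul, mul_pow, ← Finset.mul_sum]
  rw [Real.sqrt_mul (sq_nonneg c), Real.sqrt_sq_eq_abs]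

lemma l2_eq_norm {ι : Type*} [Fintype ι] (x : ι → ℝ) :
    l2 x = ‖((WithLp.equiv 2 (ι → ℝ)).symm x : EuclideanSpace ℝ ι)‖ := by
  rw [EuclideanSpace.norm_eq]
  simp [l2, WithLp.equiv_symm_apply, PiLp.toLp_apply, Real.norm_eq_abs, sq_abs]

lemma l2_sum_le {ι κ : Type*} [Fintype ι] (s : Finset κ) (f : κ → ι → ℝ) :
    l2 (∑ j ∈ s, f j) ≤ ∑ j ∈ s, l2 (f j) := by
  simp only [l2_eq_norm]
  have : ((WithLp.equiv 2 (ι → ℝ)).symm (∑ j ∈ s, f j) : EuclideanSpace ℝ ι)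
      = ∑ j ∈ s, ((WithLp.equiv 2 (ι → ℝ)).symm (f j) : EuclideanSpace ℝ ι) := WithLp.toLp_sum 2 (ι → ℝ) s f
  rw [this]
  exact norm_sum_le _ _

noncomputable def dt {n : ℕ} (u v : Fin n → ℝ) : ℝ := ∑ i, u i * v i

lemma dt_self {n : ℕ} (u : Fin n → ℝ) : dt u u = l2 u ^ 2 := by
  rw [l2_sq]; exact Finset.sum_congr rfl fun i _ => (sq (u i)) ▸ (pow_two (u i)).symm

open scoped Classical in
lemma sparse_mono {ι : Type*} [Fintype ι] {m : ℕ} {x y : ι → ℝ}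
    (h : ∀ i, y i ≠ 0 → x i ≠ 0) (hx : sparse m x) : sparse m y := by
  unfold sparse at *
  refine le_trans (Finset.card_le_card ?_) hx
  intro i hi
  simp only [Finset.mem_filter, Finset.mem_univ, true_and] at *
  exact h i hi

lemma sparse_add {ι : Type*} [Fintype ι] {k : ℕ} {u v : ι → ℝ}
    (hu : sparse k u) (hv : sparse k v) : sparse (2 * k) (u + v) := by
  classical
  unfold sparse at *
  calc (Finset.univ.filter fun i => (u + v) i ≠ 0).card
      ≤ ((Finset.univ.filter fun i => u i ≠ 0) ∪ (Finset.univ.filter fun i => v i ≠ 0)).card := by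
        apply Finset.card_le_card
        intro i hi
        simp only [Finset.mem_filter, Finset.mem_union, Finset.mem_univ, true_and, Pi.add_apply] at *
        by_contra hc
        push_neg at hc
        exact hi (by rw [hc.1, hc.2, add_zero])
    _ ≤ _ + _ := Finset.card_union_le _ _
    _ ≤ 2 * k := by omega

lemma sparse_sub {ι : Type*} [Fintype ι] {k : ℕ} {u v : ι → ℝ}
    (hu : sparse k u) (hv : sparse k v) : sparse (2 * k) (u - v) := by
  have := sparse_add hu (sparse_mono (x := v) (fun i h => by simpa using h) hv : sparse k (-v))
  simpa [sub_eq_add_neg] using this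

lemma l2_add_of_disj {ι : Type*} [Fintype ι] {u v : ι → ℝ}
    (hd : ∀ i, u i = 0 ∨ v i = 0) :
    l2 (u + v) ^ 2 = l2 u ^ 2 + l2 v ^ 2 ∧ l2 (u - v) ^ 2 = l2 u ^ 2 + l2 v ^ 2 := by
  simp only [l2_sq, ← Finset.sum_add_distrib]
  constructor <;> refine Finset.sum_congr rfl fun i _ => ?_ <;>
    rcases hd i with h | h <;> simp [h] <;> ring

lemma parallelogram {n : ℕ} (a b : Fin n → ℝ) :
    l2 (a + b) ^ 2 - l2 (a - b) ^ 2 = 4 * dt a b := by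
  simp only [l2_sq, ← Finset.sum_sub_distrib, dt, Finset.mul_sum]
  refine Finset.sum_congr rfl fun i _ => ?_
  simp only [Pi.add_apply, Pi.sub_apply]; ring

lemma cross {N d k : ℕ} (A : Matrix (Fin N) (Fin d) ℝ) (δ : ℝ)
    (hR : RIP A (2 * k) δ) (u v : Fin d → ℝ) (hu : sparse k u) (hv : sparse k v)
    (hd : ∀ i, u i = 0 ∨ v i = 0) :
    dt (A.mulVec u) (A.mulVec v) ≤ δ * (l2 u * l2 v) := by
  -- unnormalized bound, for any pair satisfying the hypotheses
  have key : ∀ u' v' : Fin d → ℝ, sparse k u' → sparse k v' → (∀ i, u' i = 0 ∨ v' i = 0) →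
      2 * dt (A.mulVec u') (A.mulVec v') ≤ δ * (l2 u' ^ 2 + l2 v' ^ 2) := by
    intro u' v' hu' hv' hd'
    obtain ⟨hplus, hminus⟩ := l2_add_of_disj hd'
    have h1 := (hR (u' + v') (sparse_add hu' hv')).2
    have h2 := (hR (u' - v') (sparse_sub hu' hv')).1
    have hp := parallelogram (A.mulVec u') (A.mulVec v')
    rw [← Matrix.mulVec_add, ← Matrix.mulVec_sub] at hp
    rw [hplus] at h1
    rw [hminus] at h2
    linarith
  set a := l2 u with ha
  set b := l2 v with hb
  have ha0 : 0 ≤ a := l2_nonneg u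
  have hb0 : 0 ≤ b := l2_nonneg v
  rcases eq_or_lt_of_le (mul_nonneg ha0 hb0) with hab | hab
  · rcases mul_eq_zero.mp hab.symm with h | h
    · have : u = 0 := l2_eq_zero h
      simp [this, dt, Matrix.mulVec_zero, ← hab]
    · have : v = 0 := l2_eq_zero h
      simp [this, dt, Matrix.mulVec_zero, ← hab]
  · have hu' : sparse k (b • u) := sparse_mono (fun i h => by
      intro hc; apply h; simp [hc]) hu
    have hv' : sparse k (a • v) := sparse_mono (fun i h => by
      intro hc; apply h; simp [hc]) hv
    have hd' : ∀ i, (b • u) i = 0 ∨ (a • v) i = 0 := fun i => by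
      rcases hd i with h | h
      · left; simp [h]
      · right; simp [h]
    have hkey := key (b • u) (a • v) hu' hv' hd'
    have hsm : A.mulVec (b • u) = b • A.mulVec u := by
      rw [Matrix.mulVec_smul]
    have hsm' : A.mulVec (a • v) = a • A.mulVec v := by
      rw [Matrix.mulVec_smul]
    rw [hsm, hsm'] at hkey
    have hdt : dt (b • A.mulVec u) (a • A.mulVec v) = (a * b) * dt (A.mulVec u) (A.mulVec v) := by
      simp only [dt, Pi.smul_apply, smul_eq_mul, Finset.mul_sum]
      exact Finset.sum_congr rfl fun i _ => by ring
    rw [hdt, l2_smul, l2_smul, abs_of_nonneg hb0, abs_of_nonneg ha0] at hkey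
    have h2 : 2 * ((a * b) * dt (A.mulVec u) (A.mulVec v)) ≤ δ * (2 * (a * b) ^ 2) := by
      calc 2 * ((a * b) * dt (A.mulVec u) (A.mulVec v)) ≤ δ * ((b * a) ^ 2 + (a * b) ^ 2) := hkey
        _ = δ * (2 * (a * b) ^ 2) := by ring
    nlinarith [hab]

/-- block j of x: coordinates i with i/k = j -/
noncomputable def blk {d : ℕ} (k : ℕ) (x : Fin d → ℝ) (j : ℕ) : Fin d → ℝ :=
  fun i => if (i : ℕ) / k = j then x i else 0

open scoped Classical in
lemma card_div_le {d k : ℕ} (hk : 1 ≤ k) (j : ℕ) :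
    (Finset.univ.filter fun i : Fin d => (i : ℕ) / k = j).card ≤ k := by
  have hmem : ∀ i : Fin d, (i : ℕ) / k = j → j * k ≤ (i : ℕ) ∧ (i : ℕ) < j * k + k := by
    intro i hi
    constructor
    · calc j * k = (i : ℕ) / k * k := by rw [hi]
        _ ≤ (i : ℕ) := Nat.div_mul_le_self _ _
    · have h := (Nat.div_lt_iff_lt_mul hk).mp (show (i : ℕ) / k < j + 1 by omega)
      rwa [add_mul, one_mul] at h
  calc (Finset.univ.filter fun i : Fin d => (i : ℕ) / k = j).card
      ≤ (Finset.range k).card := by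
        refine Finset.card_le_card_of_injOn (fun i => (i : ℕ) - j * k) ?_ ?_
        · intro i hi
          simp only [Finset.mem_coe, Finset.mem_filter, Finset.mem_univ, true_and] at hi
          obtain ⟨h1, h2⟩ := hmem i hi
          simp only [Finset.mem_coe, Finset.mem_range]
          omega
        · intro i₁ h₁ i₂ h₂ he
          simp only [Finset.mem_coe, Finset.mem_filter, Finset.mem_univ, true_and] at h₁ h₂
          simp only at he
          obtain ⟨g1, _⟩ := hmem i₁ h₁
          obtain ⟨g2, _⟩ := hmem i₂ h₂
          exact Fin.ext (by omega)
    _ = k := Finset.card_range k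

open scoped Classical in
lemma blk_sparse {d k : ℕ} (hk : 1 ≤ k) (x : Fin d → ℝ) (j : ℕ) : sparse k (blk k x j) := by
  unfold sparse
  refine le_trans (Finset.card_le_card ?_) (card_div_le hk j)
  intro i hi
  simp only [Finset.mem_filter, Finset.mem_univ, true_and, blk] at *
  by_contra hc
  simp [hc] at hi

lemma blk_sum {d k : ℕ} (hk : 1 ≤ k) (x : Fin d → ℝ) :
    ∑ j ∈ Finset.range d, blk k x j = x := by
  funext i
  rw [Finset.sum_apply]
  simp only [blk]
  rw [Finset.sum_ite_eq]
  have : (i : ℕ) / k ∈ Finset.range d := by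
    simp only [Finset.mem_range]
    exact lt_of_le_of_lt (Nat.div_le_self _ _) i.isLt
  simp [this]

lemma blk_l1_sum {d k : ℕ} (hk : 1 ≤ k) (x : Fin d → ℝ) :
    ∑ j ∈ Finset.range d, l1 (blk k x j) = l1 x := by
  unfold l1
  rw [Finset.sum_comm]
  refine Finset.sum_congr rfl fun i _ => ?_
  simp only [blk, apply_ite abs, abs_zero]
  rw [Finset.sum_ite_eq]
  have : (i : ℕ) / k ∈ Finset.range d := by
    simp only [Finset.mem_range]
    exact lt_of_le_of_lt (Nat.div_le_self _ _) i.isLt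
  simp [this]

open scoped Classical in
lemma blk_l1_eq {d k : ℕ} (x : Fin d → ℝ) (j : ℕ) :
    l1 (blk k x j) = ∑ i ∈ Finset.univ.filter (fun i : Fin d => (i : ℕ) / k = j), |x i| := by
  unfold l1
  rw [Finset.sum_filter]
  refine Finset.sum_congr rfl fun i _ => ?_
  simp only [blk, apply_ite abs, abs_zero]

lemma l1_blk_nonneg {d k : ℕ} (x : Fin d → ℝ) (j : ℕ) : 0 ≤ l1 (blk k x j) := by
  unfold l1; positivity

open scoped Classical in
lemma shelling {d k : ℕ} (hk : 1 ≤ k) (x : Fin d → ℝ)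
    (hmono : ∀ i j : Fin d, i ≤ j → |x j| ≤ |x i|) (j : ℕ) :
    l2 (blk k x (j + 1)) ≤ l1 (blk k x j) / Real.sqrt k := by
  have hk0 : (0:ℝ) < Real.sqrt k := Real.sqrt_pos.mpr (by exact_mod_cast hk)
  set s := Finset.univ.filter (fun i : Fin d => (i : ℕ) / k = j + 1) with hs
  set t := Finset.univ.filter (fun i : Fin d => (i : ℕ) / k = j) with ht
  have hl2 : l2 (blk k x (j + 1)) ^ 2 = ∑ i ∈ s, (x i) ^ 2 := by
    rw [l2_sq, Finset.sum_filter]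
    refine Finset.sum_congr rfl fun i _ => ?_
    simp only [blk, apply_ite (· ^ 2)]
    norm_num
  rcases Finset.eq_empty_or_nonempty s with he | ⟨i₀, hi₀⟩
  · have : l2 (blk k x (j + 1)) = 0 := by
      have h0 : ∀ i : Fin d, blk k x (j + 1) i = 0 := by
        intro i
        simp only [blk]
        have : ¬ ((i : ℕ) / k = j + 1) := by
          intro hc
          exact Finset.notMem_empty i (he ▸ (Finset.mem_filter.mpr ⟨Finset.mem_univ i, hc⟩))
        simp [this]
      unfold l2
      simp [h0]
    rw [this]
    exact div_nonneg (l1_blk_nonneg x j) (le_of_lt hk0)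
  · -- s nonempty: every index in [j*k, (j+1)*k) is < d, so t has exactly k elements
    simp only [hs, Finset.mem_filter, Finset.mem_univ, true_and] at hi₀
    have hub : (j + 1) * k ≤ (i₀ : ℕ) := by
      rw [← hi₀]
      exact Nat.div_mul_le_self _ _
    have htcard : t.card = k := by
      refine le_antisymm (card_div_le hk j) ?_
      have hlt : ∀ r < k, j * k + r < d := by
        intro r hr
        have h1 : j * k + r < (j + 1) * k := by rw [add_mul, one_mul]; omega
        exact lt_of_lt_of_le h1 (le_trans hub (le_of_lt i₀.isLt))
      have : (Finset.range k).card ≤ t.card := by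
        refine Finset.card_le_card_of_injOn
          (fun r => if h : j * k + r < d then (⟨j * k + r, h⟩ : Fin d) else i₀) ?_ ?_
        · intro r hr
          simp only [Finset.mem_coe, Finset.mem_range] at hr
          dsimp only
          rw [dif_pos (hlt r hr)]
          simp only [ht, Finset.mem_coe, Finset.mem_filter, Finset.mem_univ, true_and]
          show (j * k + r) / k = j
          rw [mul_comm j k, Nat.mul_add_div (by omega)]
          simp [Nat.div_eq_of_lt hr]
        · intro r₁ h₁ r₂ h₂ he
          simp only [Finset.mem_coe, Finset.mem_range] at h₁ h₂
          dsimp only at he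
          rw [dif_pos (hlt r₁ h₁), dif_pos (hlt r₂ h₂)] at he
          have := congrArg Fin.val he
          simp only at this
          omega
      simpa using this
    -- pointwise bound
    have hbd : ∀ i ∈ s, |x i| * k ≤ l1 (blk k x j) := by
      intro i hi
      simp only [hs, Finset.mem_filter, Finset.mem_univ, true_and] at hi
      rw [blk_l1_eq]
      have : |x i| * k = ∑ _t' ∈ t, |x i| := by
        rw [Finset.sum_const, htcard, nsmul_eq_mul, mul_comm]
      rw [this]
      refine Finset.sum_le_sum fun t' ht' => ?_
      simp only [ht, Finset.mem_filter, Finset.mem_univ, true_and] at ht'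
      apply hmono
      -- t' ≤ i in Fin d
      have h1 : (t' : ℕ) < (j + 1) * k := by
        have := (Nat.div_lt_iff_lt_mul hk).mp (show (t' : ℕ) / k < j + 1 by omega)
        exact this
      have h2 : (j + 1) * k ≤ (i : ℕ) := by
        rw [← hi]
        exact Nat.div_mul_le_self _ _
      exact Fin.le_def.mpr (by omega)
    -- sum up
    have hcard_s : s.card ≤ k := card_div_le hk (j + 1)
    have hsum : ∑ i ∈ s, (x i) ^ 2 ≤ (l1 (blk k x j) / k) ^ 2 * k := by
      calc ∑ i ∈ s, (x i) ^ 2 ≤ ∑ _i ∈ s, (l1 (blk k x j) / k) ^ 2 := by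
            refine Finset.sum_le_sum fun i hi => ?_
            have hb := hbd i hi
            have : |x i| ≤ l1 (blk k x j) / k := by
              rw [le_div_iff₀ (by exact_mod_cast hk : (0:ℝ) < (k:ℝ))]
              exact_mod_cast hb
            calc (x i) ^ 2 = |x i| ^ 2 := (sq_abs _).symm
              _ ≤ (l1 (blk k x j) / k) ^ 2 := by
                  apply pow_le_pow_left₀ (abs_nonneg _) this
        _ = s.card * (l1 (blk k x j) / k) ^ 2 := by rw [Finset.sum_const, nsmul_eq_mul]
        _ ≤ (l1 (blk k x j) / k) ^ 2 * k := by
            rw [mul_comm]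
            apply mul_le_mul_of_nonneg_left (by exact_mod_cast hcard_s) (by positivity)
    have hfin : l2 (blk k x (j + 1)) ^ 2 ≤ (l1 (blk k x j) / Real.sqrt k) ^ 2 := by
      rw [hl2]
      refine le_trans hsum (le_of_eq ?_)
      rw [div_pow, div_pow, Real.sq_sqrt (by positivity : (0:ℝ) ≤ (k:ℝ))]
      field_simp
    have h := Real.sqrt_le_sqrt hfin
    rwa [Real.sqrt_sq (l2_nonneg _),
      Real.sqrt_sq (div_nonneg (l1_blk_nonneg x j) (le_of_lt hk0))] at h

lemma blk_disj {d k : ℕ} (x : Fin d → ℝ) {j j' : ℕ} (h : j ≠ j') (i : Fin d) :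
    blk k x j i = 0 ∨ blk k x j' i = 0 := by
  simp only [blk]
  by_cases hc : (i : ℕ) / k = j
  · right; rw [if_neg (by omega)]
  · left; rw [if_neg hc]

lemma dt_sum_right {n : ℕ} {κ : Type*} (a : Fin n → ℝ) (s : Finset κ) (f : κ → Fin n → ℝ) :
    dt a (∑ j ∈ s, f j) = ∑ j ∈ s, dt a (f j) := by
  unfold dt
  rw [Finset.sum_comm]
  refine Finset.sum_congr rfl fun i _ => ?_
  rw [Finset.sum_apply, Finset.mul_sum]

lemma dt_neg_right {n : ℕ} (a b : Fin n → ℝ) : dt a (-b) = - dt a b := by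
  unfold dt
  rw [← Finset.sum_neg_distrib]
  exact Finset.sum_congr rfl fun i _ => by simp [mul_comm]

lemma mulVec_sum {N d : ℕ} {κ : Type*} (A : Matrix (Fin N) (Fin d) ℝ) (s : Finset κ)
    (f : κ → Fin d → ℝ) : A.mulVec (∑ j ∈ s, f j) = ∑ j ∈ s, A.mulVec (f j) := by
  have h := map_sum A.mulVecLin f s
  simpa only [Matrix.mulVecLin_apply] using h

lemma core {N d k : ℕ} (hk : 1 ≤ k) (A : Matrix (Fin N) (Fin d) ℝ)
    (δk δ2k : ℝ) (hδk1 : δk < 1) (hδ2k0 : 0 ≤ δ2k)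
    (hRk : RIP A k δk) (hR2k : RIP A (2 * k) δ2k)
    (x : Fin d → ℝ) (hker : A.mulVec x = 0)
    (hmono : ∀ i j : Fin d, i ≤ j → |x j| ≤ |x i|) :
    l2 x ≤ (1 + δ2k / (1 - δk)) * (1 / Real.sqrt k) * l1 x := by
  have hk0 : (0:ℝ) < Real.sqrt k := Real.sqrt_pos.mpr (by exact_mod_cast hk)
  have hδ : (0:ℝ) < 1 - δk := by linarith
  have hc0 : 0 ≤ δ2k / (1 - δk) := div_nonneg hδ2k0 (le_of_lt hδ)
  have hl1 : 0 ≤ l1 x := Finset.sum_nonneg fun i _ => abs_nonneg _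
  rcases Nat.eq_zero_or_pos d with hd | hd
  · subst hd
    have : l2 x = 0 := by unfold l2; simp
    rw [this]
    have : 0 ≤ (1 + δ2k / (1 - δk)) * (1 / Real.sqrt k) := by positivity
    exact mul_nonneg this hl1
  -- main case
  set T : ℕ → Fin d → ℝ := blk k x with hT
  set S : ℝ := ∑ j ∈ Finset.Ico 1 d, l2 (T j) with hSdef
  have hS0 : 0 ≤ S := Finset.sum_nonneg fun j _ => l2_nonneg _
  have hxsum : x = ∑ j ∈ Finset.range d, T j := (blk_sum hk x).symm
  have hsplit : ∑ j ∈ Finset.range d, T j = T 0 + ∑ j ∈ Finset.Ico 1 d, T j := by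
    rw [Finset.range_eq_Ico, Finset.sum_eq_sum_Ico_succ_bot hd]
  -- Step 2 : S ≤ l1 x / √k
  have hS : S ≤ l1 x / Real.sqrt k := by
    have h1 : S = ∑ j ∈ Finset.range (d - 1), l2 (T (1 + j)) := by
      rw [hSdef, Finset.sum_Ico_eq_sum_range]
    have h2 : ∀ j, l2 (T (1 + j)) ≤ l1 (T j) / Real.sqrt k := by
      intro j
      rw [add_comm 1 j]
      exact shelling hk x hmono j
    calc S ≤ ∑ j ∈ Finset.range (d - 1), l1 (T j) / Real.sqrt k := by
          rw [h1]; exact Finset.sum_le_sum fun j _ => h2 j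
      _ ≤ ∑ j ∈ Finset.range d, l1 (T j) / Real.sqrt k := by
          apply Finset.sum_le_sum_of_subset_of_nonneg
          · exact Finset.range_subset_range.mpr (by omega)
          · intro j _ _
            exact div_nonneg (l1_blk_nonneg x j) (le_of_lt hk0)
      _ = l1 x / Real.sqrt k := by
          rw [← Finset.sum_div, blk_l1_sum hk x]
  -- Step 1 : head bound
  have hhead : (1 - δk) * l2 (T 0) ^ 2 ≤ δ2k * (l2 (T 0) * S) := by
    have hr := (hRk (T 0) (blk_sparse hk x 0)).1
    have hATx : A.mulVec (T 0) = - A.mulVec (∑ j ∈ Finset.Ico 1 d, T j) := by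
      have h0 : A.mulVec x = A.mulVec (T 0) + A.mulVec (∑ j ∈ Finset.Ico 1 d, T j) := by
        rw [hxsum, hsplit, Matrix.mulVec_add]
      rw [hker] at h0
      exact eq_neg_of_add_eq_zero_left h0.symm
    have h2 : A.mulVec (T 0) = ∑ j ∈ Finset.Ico 1 d, A.mulVec (-(T j)) := by
      rw [hATx, _root_.mulVec_sum, ← Finset.sum_neg_distrib]
      exact Finset.sum_congr rfl fun j _ => by rw [Matrix.mulVec_neg]
    have hdd : l2 (A.mulVec (T 0)) ^ 2 = ∑ j ∈ Finset.Ico 1 d, dt (A.mulVec (T 0)) (A.mulVec (-(T j))) := by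
      rw [← dt_self]
      nth_rewrite 2 [h2]
      rw [dt_sum_right]
    have hcr : ∀ j ∈ Finset.Ico 1 d, dt (A.mulVec (T 0)) (A.mulVec (-(T j)))
        ≤ δ2k * (l2 (T 0) * l2 (T j)) := by
      intro j hj
      simp only [Finset.mem_Ico] at hj
      have hdisj : ∀ i, T 0 i = 0 ∨ (-(T j)) i = 0 := by
        intro i
        rcases blk_disj x (show (0:ℕ) ≠ j by omega) i with h | h
        · left; exact h
        · right
          show -(T j i) = 0
          rw [show T j i = 0 from h, neg_zero]
      have hspn : sparse k (-(T j)) := sparse_mono (fun i h => by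
        intro hc; apply h; show -(T j i) = 0; rw [show T j i = 0 from hc, neg_zero]) (blk_sparse hk x j)
      have := cross A δ2k hR2k (T 0) (-(T j)) (blk_sparse hk x 0) hspn hdisj
      have hl2n : l2 (-(T j)) = l2 (T j) := by
        unfold l2; congr 1; exact Finset.sum_congr rfl fun i _ => by simp
      rwa [hl2n] at this
    calc (1 - δk) * l2 (T 0) ^ 2 ≤ l2 (A.mulVec (T 0)) ^ 2 := hr
      _ = ∑ j ∈ Finset.Ico 1 d, dt (A.mulVec (T 0)) (A.mulVec (-(T j))) := hdd
      _ ≤ ∑ j ∈ Finset.Ico 1 d, δ2k * (l2 (T 0) * l2 (T j)) := Finset.sum_le_sum hcr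
      _ = δ2k * (l2 (T 0) * S) := by
          rw [hSdef, Finset.mul_sum, Finset.mul_sum]
  -- head estimate
  have hT0 : l2 (T 0) ≤ (δ2k / (1 - δk)) * S := by
    rcases eq_or_lt_of_le (l2_nonneg (T 0)) with h0 | h0
    · rw [← h0]
      exact mul_nonneg hc0 hS0
    · rw [div_mul_eq_mul_div, le_div_iff₀ hδ]
      have := mul_le_mul_of_nonneg_right hhead (le_of_lt (inv_pos.mpr h0))
      calc l2 (T 0) * (1 - δk) = ((1 - δk) * l2 (T 0) ^ 2) * (l2 (T 0))⁻¹ := by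
            field_simp
        _ ≤ (δ2k * (l2 (T 0) * S)) * (l2 (T 0))⁻¹ :=
            mul_le_mul_of_nonneg_right hhead (le_of_lt (inv_pos.mpr h0))
        _ = δ2k * S := by field_simp
  -- triangle inequality
  have htri : l2 x ≤ l2 (T 0) + S := by
    calc l2 x = l2 (∑ j ∈ Finset.range d, T j) := by rw [← hxsum]
      _ ≤ ∑ j ∈ Finset.range d, l2 (T j) := l2_sum_le _ _
      _ = l2 (T 0) + S := by
          rw [Finset.range_eq_Ico, Finset.sum_eq_sum_Ico_succ_bot hd]
  calc l2 x ≤ l2 (T 0) + S := htri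
    _ ≤ (δ2k / (1 - δk)) * S + S := by linarith
    _ = (1 + δ2k / (1 - δk)) * S := by ring
    _ ≤ (1 + δ2k / (1 - δk)) * (l1 x / Real.sqrt k) := by
        apply mul_le_mul_of_nonneg_left hS (by linarith)
    _ = (1 + δ2k / (1 - δk)) * (1 / Real.sqrt k) * l1 x := by ring

open scoped Classical in
lemma sparse_comp_symm {d m : ℕ} (σ : Equiv.Perm (Fin d)) {z : Fin d → ℝ}
    (hz : sparse m z) : sparse m (z ∘ σ.symm) := by
  unfold sparse at *
  refine le_trans (le_of_eq ?_) hz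
  apply Finset.card_bij (fun i _ => σ.symm i)
  · intro i hi
    simp only [Finset.mem_filter, Finset.mem_univ, true_and, Function.comp_apply] at *
    exact hi
  · intro i₁ h₁ i₂ h₂ he
    exact σ.symm.injective he
  · intro b hb
    refine ⟨σ b, ?_, by simp⟩
    simp only [Finset.mem_filter, Finset.mem_univ, true_and, Function.comp_apply] at *
    simpa using hb

lemma l2_comp_symm {d : ℕ} (σ : Equiv.Perm (Fin d)) (z : Fin d → ℝ) :
    l2 (z ∘ σ.symm) = l2 z := by
  unfold l2
  congr 1
  exact Fintype.sum_equiv σ.symm _ _ fun i => rfl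

lemma RIP_perm {N d : ℕ} (A : Matrix (Fin N) (Fin d) ℝ) (σ : Equiv.Perm (Fin d))
    {m : ℕ} {δ : ℝ} (h : RIP A m δ) : RIP (A.submatrix id σ) m δ := by
  intro z hz
  have hz' : sparse m (z ∘ σ.symm) := sparse_comp_symm σ hz
  have hmv : (A.submatrix id σ).mulVec z = A.mulVec (z ∘ σ.symm) := by
    have := Matrix.submatrix_mulVec_equiv A z (id : Fin N → Fin N) σ
    simpa using this
  have hres := h (z ∘ σ.symm) hz'
  rw [hmv, l2_comp_symm σ z] at *
  exact hres


theorem stmt7 {N d k : ℕ} (hk : 1 ≤ k) (A : Matrix (Fin N) (Fin d) ℝ)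
    (δk δ2k : ℝ) (hδk0 : 0 ≤ δk) (hδk1 : δk < 1) (hδ2k0 : 0 ≤ δ2k) (hδ2k1 : δ2k < 1)
    (hRk : RIP A k δk) (hR2k : RIP A (2 * k) δ2k)
    (x : Fin d → ℝ) (hker : A.mulVec x = 0) (hx : x ≠ 0) :
    l2 x ≤ (1 + δ2k / (1 - δk)) * (1 / Real.sqrt k) * l1 x := by
  set σ := Tuple.sort (fun i => -|x i|) with hσ
  set y : Fin d → ℝ := x ∘ σ with hy
  have hmono : ∀ i j : Fin d, i ≤ j → |y j| ≤ |y i| := by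
    intro i j hij
    have := Tuple.monotone_sort (fun i => -|x i|) hij
    simp only [Function.comp_apply] at this
    simp only [hy, Function.comp_apply]
    linarith
  have hkery : (A.submatrix id σ).mulVec y = 0 := by
    have := Matrix.submatrix_mulVec_equiv A y (id : Fin N → Fin N) σ
    have hyx : y ∘ σ.symm = x := by
      funext i
      simp [hy]
    simp only [hyx] at this
    simpa [this] using hker
  have := core hk (A.submatrix id σ) δk δ2k hδk1 hδ2k0
      (RIP_perm A σ hRk) (RIP_perm A σ hR2k) y hkery hmono
  have hl2 : l2 y = l2 x := by
    unfold l2; congr 1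
    exact Fintype.sum_equiv σ _ _ fun i => rfl
  have hl1 : l1 y = l1 x := by
    unfold l1
    exact Fintype.sum_equiv σ _ _ fun i => rfl
  rwa [hl2, hl1] at this
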